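/- Let K ≥ 1 be an integer and δ ∈ [0,1) a real number. Then (1 − δ^K) · Σ_{k=1}^{K} 1/(1 − δ^k) = K + Σ_{j=2}^{K} δ^{K−j+1}(1−δ)^{j−1} · Σ_{k=1}^{K−j+1} C(K−k, j−1)/(1 − δ^k), where C(·,·) denotes the binomial coefficient. -/

import Mathlib

open Finset

private lemma binom_aux (δ : ℝ) (n : ℕ) (hn : 1 ≤ n) :
    ∑ i ∈ Finset.Icc 1 n, (n.choose i : ℝ) * (1 - δ) ^ i * δ ^ (n - i) = 1 - δ ^ n := by
  have h1 : ∑ i ∈ Finset.range (n + 1), (1 - δ) ^ i * δ ^ (n - i) * (n.choose i : ℝ) = 1 := by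
    rw [← add_pow]; norm_num
  have h2 : ∑ i ∈ Finset.range (n + 1), (1 - δ) ^ i * δ ^ (n - i) * (n.choose i : ℝ)
      = δ ^ n + ∑ i ∈ Finset.Icc 1 n, (n.choose i : ℝ) * (1 - δ) ^ i * δ ^ (n - i) := by
    rw [Finset.sum_range_succ' (fun i => (1 - δ) ^ i * δ ^ (n - i) * (n.choose i : ℝ)) n]
    rw [← Finset.Ico_add_one_right_eq_Icc, Finset.sum_Ico_eq_sum_range]
    simp [add_comm, mul_comm, mul_assoc, mul_left_comm]
  linarith [h1, h2]

/-- For an integer `K ≥ 1` and `δ ∈ [0,1)`,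
`(1 - δ^K) Σ_{k=1}^K 1/(1-δ^k)
  = K + Σ_{j=2}^K δ^(K-j+1)(1-δ)^(j-1) Σ_{k=1}^{K-j+1} C(K-k, j-1)/(1-δ^k)`. -/
theorem order_one_rate_identity (K : ℕ) (hK : 1 ≤ K) (δ : ℝ) (hδ0 : 0 ≤ δ) (hδ1 : δ < 1) :
    (1 - δ ^ K) * ∑ k ∈ Finset.Icc 1 K, 1 / (1 - δ ^ k)
      = K + ∑ j ∈ Finset.Icc 2 K, δ ^ (K - j + 1) * (1 - δ) ^ (j - 1) *
          ∑ k ∈ Finset.Icc 1 (K - j + 1), (Nat.choose (K - k) (j - 1) : ℝ) / (1 - δ ^ k) := by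
  have hne : ∀ k : ℕ, 1 ≤ k → (1 : ℝ) - δ ^ k ≠ 0 := by
    intro k hk
    have : δ ^ k < 1 := pow_lt_one₀ hδ0 hδ1 (by omega)
    linarith
  -- LHS computation
  have hL : (1 - δ ^ K) * ∑ k ∈ Finset.Icc 1 K, 1 / (1 - δ ^ k)
      = K + ∑ k ∈ Finset.Icc 1 (K - 1), (δ ^ k - δ ^ K) / (1 - δ ^ k) := by
    rw [Finset.mul_sum]
    have : ∀ k ∈ Finset.Icc 1 K, (1 - δ ^ K) * (1 / (1 - δ ^ k))
        = 1 + (δ ^ k - δ ^ K) / (1 - δ ^ k) := by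
      intro k hk
      rw [Finset.mem_Icc] at hk
      field_simp [hne k hk.1]
      ring
    rw [Finset.sum_congr rfl this, Finset.sum_add_distrib]
    simp only [Finset.sum_const, Nat.card_Icc, smul_eq_mul, mul_one]
    have hsplit : ∑ k ∈ Finset.Icc 1 K, (δ ^ k - δ ^ K) / (1 - δ ^ k)
        = ∑ k ∈ Finset.Icc 1 (K - 1), (δ ^ k - δ ^ K) / (1 - δ ^ k) := by
      have : Finset.Icc 1 K = insert K (Finset.Icc 1 (K - 1)) := by
        ext x; simp [Finset.mem_Icc, Finset.mem_insert]; omega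
      rw [this, Finset.sum_insert (by simp [Finset.mem_Icc]; omega)]
      simp
    rw [hsplit]
    simp [Nat.cast_sub hK]
  rw [hL]
  congr 1
  -- RHS: push factor inside, swap sums
  have hpush : ∀ j, δ ^ (K - j + 1) * (1 - δ) ^ (j - 1) *
      ∑ k ∈ Finset.Icc 1 (K - j + 1), (Nat.choose (K - k) (j - 1) : ℝ) / (1 - δ ^ k)
      = ∑ k ∈ Finset.Icc 1 (K - j + 1),
          δ ^ (K - j + 1) * (1 - δ) ^ (j - 1) * ((Nat.choose (K - k) (j - 1) : ℝ) / (1 - δ ^ k)) := by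
    intro j; rw [Finset.mul_sum]
  simp only [hpush]
  rw [Finset.sum_comm' (s := Finset.Icc 2 K) (t := fun j => Finset.Icc 1 (K - j + 1))
    (t' := Finset.Icc 1 (K - 1)) (s' := fun k => Finset.Icc 2 (K - k + 1))
    (by intro j k; simp only [Finset.mem_Icc]; omega)]
  refine (Finset.sum_congr rfl ?_).symm
  intro k hk
  rw [Finset.mem_Icc] at hk
  -- inner sum over j
  have hn : 1 ≤ K - k := by omega
  set n := K - k with hnk
  have hinner : ∑ j ∈ Finset.Icc 2 (K - k + 1),
      δ ^ (K - j + 1) * (1 - δ) ^ (j - 1) * ((Nat.choose (K - k) (j - 1) : ℝ) / (1 - δ ^ k))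
      = (∑ i ∈ Finset.Icc 1 n, δ ^ k * ((n.choose i : ℝ) * (1 - δ) ^ i * δ ^ (n - i))) / (1 - δ ^ k) := by
    rw [Finset.sum_div]
    rw [← Finset.Ico_add_one_right_eq_Icc, ← Finset.Ico_add_one_right_eq_Icc, Finset.sum_Ico_eq_sum_range,
      Finset.sum_Ico_eq_sum_range]
    have hlen : K - k + 1 + 1 - 2 = n := by omega
    have hlen2 : n + 1 - 1 = n := by omega
    rw [hlen, hlen2]
    refine Finset.sum_congr rfl ?_
    intro i hi
    rw [Finset.mem_range] at hi
    have e1 : K - (2 + i) + 1 = k + (n - (1 + i)) := by omega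
    have e2 : 2 + i - 1 = 1 + i := by omega
    have e3 : K - (2 + i) + 1 = K - (1 + i) := by omega
    rw [e1, e2]
    have e4 : K - (1 + i) = k + (n - (1 + i)) := by omega
    rw [pow_add]
    rw [← hnk]
    ring_nf
  rw [hinner, ← Finset.mul_sum, binom_aux δ n hn]
  have : δ ^ k * (1 - δ ^ n) = δ ^ k - δ ^ K := by
    have : δ ^ k * δ ^ n = δ ^ K := by rw [← pow_add]; congr 1; omega
    nlinarith [this]
  rw [this]
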